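/- For the scale-invariant losses f_1, f_2 of Theorem 1 evaluated on the unit sphere, the difference of gradients satisfies ‖g_1 − g_2‖² = 4 sin² α cos² α (x² + y² − 4x²y²). -/

import Mathlib

open Real


open InnerProductSpace in
noncomputable def gvec (c s : ℝ) (v : EuclideanSpace ℝ (Fin 3)) : EuclideanSpace ℝ (Fin 3) :=
  (WithLp.equiv 2 (Fin 3 → ℝ)).symm
    ![ (v 0 * c + v 1 * s) * c - (v 0 * c + v 1 * s) ^ 2 * v 0,
       (v 0 * c + v 1 * s) * s - (v 0 * c + v 1 * s) ^ 2 * v 1,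
       - (v 0 * c + v 1 * s) ^ 2 * v 2 ]

open InnerProductSpace in
lemma key (c s : ℝ) (f : EuclideanSpace ℝ (Fin 3) → ℝ)
    (hf : ∀ v : EuclideanSpace ℝ (Fin 3),
      f v = (1 / 2) * (v 0 * c + v 1 * s) ^ 2 / ((v 0) ^ 2 + (v 1) ^ 2 + (v 2) ^ 2))
    (v : EuclideanSpace ℝ (Fin 3)) (hv : (v 0) ^ 2 + (v 1) ^ 2 + (v 2) ^ 2 = 1) :
    gradient f v = gvec c s v := by
  have hfe : f = fun w : EuclideanSpace ℝ (Fin 3) =>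
      ((1 / 2) * ((w 0 * c + w 1 * s) * (w 0 * c + w 1 * s)))
        * (w 0 * w 0 + w 1 * w 1 + w 2 * w 2)⁻¹ := by
    funext w; rw [hf w]; ring
  have h0 : HasFDerivAt (fun w : EuclideanSpace ℝ (Fin 3) => w 0)
      ((EuclideanSpace.proj (0 : Fin 3) : EuclideanSpace ℝ (Fin 3) →L[ℝ] ℝ)) v := by
    exact ((EuclideanSpace.proj (0 : Fin 3) : EuclideanSpace ℝ (Fin 3) →L[ℝ] ℝ)).hasFDerivAt
  have h1 : HasFDerivAt (fun w : EuclideanSpace ℝ (Fin 3) => w 1)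
      ((EuclideanSpace.proj (1 : Fin 3) : EuclideanSpace ℝ (Fin 3) →L[ℝ] ℝ)) v := by
    exact ((EuclideanSpace.proj (1 : Fin 3) : EuclideanSpace ℝ (Fin 3) →L[ℝ] ℝ)).hasFDerivAt
  have h2 : HasFDerivAt (fun w : EuclideanSpace ℝ (Fin 3) => w 2)
      ((EuclideanSpace.proj (2 : Fin 3) : EuclideanSpace ℝ (Fin 3) →L[ℝ] ℝ)) v := by
    exact ((EuclideanSpace.proj (2 : Fin 3) : EuclideanSpace ℝ (Fin 3) →L[ℝ] ℝ)).hasFDerivAt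
  have hu := (h0.mul_const c).add (h1.mul_const s)
  have hnum := (hu.mul hu).const_mul (1/2 : ℝ)
  have hden := ((h0.mul h0).add (h1.mul h1)).add (h2.mul h2)
  have hone : v 0 * v 0 + v 1 * v 1 + v 2 * v 2 = 1 := by linear_combination hv
  have hdenne : v 0 * v 0 + v 1 * v 1 + v 2 * v 2 ≠ 0 := by rw [hone]; norm_num
  have hinv := (hasDerivAt_inv hdenne).comp_hasFDerivAt v hden
  have hdiv := hnum.mul hinv
  simp only [Function.comp_def] at hdiv
  simp only [Pi.mul_def, Pi.add_def] at hdiv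
  rw [← hfe] at hdiv
  have hg : HasGradientAt f (gvec c s v) v := by
    rw [hasGradientAt_iff_hasFDerivAt]
    convert hdiv using 1
    · rfl
    ext w
    simp only [toDual_apply_apply, PiLp.inner_apply, RCLike.inner_apply, starRingEnd_apply, star_trivial,
      Fin.sum_univ_three, gvec, WithLp.equiv_symm_apply, PiLp.toLp_apply, Matrix.cons_val_zero,
      Matrix.cons_val_one, Matrix.head_cons, Matrix.cons_val_two, Matrix.tail_cons,
      ContinuousLinearMap.add_apply, ContinuousLinearMap.smul_apply,
      ContinuousLinearMap.coe_smul', Pi.smul_apply, PiLp.proj_apply,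
      smul_eq_mul]
    rw [hone]
    ring
  exact hg.gradient

/-- For the scale-invariant losses `f₁, f₂` on the unit sphere, the squared norm
of the difference of gradients is
`‖g₁ − g₂‖² = 4 sin² α cos² α (x² + y² − 4x²y²)`. -/
theorem norm_sq_grad_diff (α : ℝ) (hα : 0 < α ∧ α < π / 4)
    (f₁ f₂ : EuclideanSpace ℝ (Fin 3) → ℝ)
    (hf₁ : ∀ v : EuclideanSpace ℝ (Fin 3),
      f₁ v = (1 / 2) * (v 0 * cos α + v 1 * sin α) ^ 2
        / ((v 0) ^ 2 + (v 1) ^ 2 + (v 2) ^ 2))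
    (hf₂ : ∀ v : EuclideanSpace ℝ (Fin 3),
      f₂ v = (1 / 2) * (v 0 * cos α - v 1 * sin α) ^ 2
        / ((v 0) ^ 2 + (v 1) ^ 2 + (v 2) ^ 2))
    (v : EuclideanSpace ℝ (Fin 3)) (hv : (v 0) ^ 2 + (v 1) ^ 2 + (v 2) ^ 2 = 1) :
    ‖gradient f₁ v - gradient f₂ v‖ ^ 2
      = 4 * sin α ^ 2 * cos α ^ 2
          * ((v 0) ^ 2 + (v 1) ^ 2 - 4 * (v 0) ^ 2 * (v 1) ^ 2) := by
  have hg₁ : gradient f₁ v = gvec (cos α) (sin α) v := key _ _ _ hf₁ v hv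
  have hg₂ : gradient f₂ v = gvec (cos α) (-sin α) v := by
    refine key _ _ _ (fun w => ?_) v hv
    rw [hf₂ w]; ring
  rw [hg₁, hg₂, ← real_inner_self_eq_norm_sq]
  simp only [PiLp.inner_apply, RCLike.inner_apply, starRingEnd_apply, star_trivial,
    Fin.sum_univ_three, gvec, PiLp.sub_apply, WithLp.equiv_symm_apply, PiLp.toLp_apply,
    Matrix.cons_val_zero, Matrix.cons_val_one, Matrix.head_cons,
    Matrix.cons_val_two, Matrix.tail_cons]
  linear_combination (16 * sin α ^ 2 * cos α ^ 2 * (v 0) ^ 2 * (v 1) ^ 2) * hv
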